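/- Let P ∈ ℂ[z] be a normalized polynomial of degree n ≥ 1, i.e. P is monic of degree n and the coefficient of z^{n-1} in P is 0. Then all coefficients of P are algebraic over ℚ if and only if every critical value of P is algebraic over ℚ. -/

import Mathlib

open Polynomial

noncomputable section
set_option maxHeartbeats 1000000
set_option synthInstance.maxHeartbeats 200000

namespace AlgCrit
open IntermediateField


variable {K : IntermediateField ℚ ℂ} (D : Derivation ℚ K ℂ)

/-- Coefficient-wise application of a derivation to a polynomial. -/
def dpoly (p : K[X]) : ℂ[X] := ⟨.ofCoeff (p.toFinsupp.coeff.mapRange (fun a => D a) (by simp))⟩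

lemma coeff_dpoly (p : K[X]) (k : ℕ) : (dpoly D p).coeff k = D (p.coeff k) := rfl

lemma dpoly_add (p q : K[X]) : dpoly D (p + q) = dpoly D p + dpoly D q := by
  ext k; simp [coeff_dpoly]

lemma dpoly_neg (p : K[X]) : dpoly D (-p) = -dpoly D p := by
  ext k; simp [coeff_dpoly]

lemma dpoly_sub (p q : K[X]) : dpoly D (p - q) = dpoly D p - dpoly D q := by
  ext k; simp [coeff_dpoly]

lemma dpoly_zero : dpoly D 0 = 0 := by ext k; simp [coeff_dpoly]

lemma dpoly_C (a : K) : dpoly D (C a) = C (D a) := by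
  ext k; simp only [coeff_dpoly, coeff_C]
  split_ifs <;> simp

lemma dpoly_one : dpoly D 1 = 0 := by
  rw [← C_1, dpoly_C]; simp

lemma dpoly_X : dpoly D X = 0 := by
  ext k; simp only [coeff_dpoly, coeff_X, coeff_zero]
  split_ifs <;> simp

lemma smul_coe (a : K) (c : ℂ) : a • c = (a : ℂ) * c := by
  rw [Algebra.smul_def]; rfl

lemma dpoly_mul (p q : K[X]) :
    dpoly D (p * q) = dpoly D p * q.map (algebraMap K ℂ) + p.map (algebraMap K ℂ) * dpoly D q := by
  ext k
  simp only [coeff_dpoly, coeff_add, coeff_mul, coeff_map]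
  rw [map_sum]
  rw [← Finset.sum_add_distrib]
  refine Finset.sum_congr rfl fun x _ => ?_
  rw [D.leibniz, smul_coe, smul_coe, IntermediateField.algebraMap_apply,
    IntermediateField.algebraMap_apply]
  ring

lemma dpoly_pow (s : K[X]) (m : ℕ) :
    dpoly D (s ^ (m + 1)) = (m + 1) • ((s.map (algebraMap K ℂ)) ^ m * dpoly D s) := by
  induction m with
  | zero => simp
  | succ m ih =>
    rw [pow_succ, dpoly_mul, ih, Polynomial.map_pow]
    simp only [nsmul_eq_mul, Nat.cast_add, Nat.cast_one]
    ring

lemma dpoly_map_rat (q : ℚ[X]) : dpoly D (q.map (algebraMap ℚ K)) = 0 := by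
  ext k; simp only [coeff_dpoly, coeff_map, Derivation.map_algebraMap, coeff_zero]

lemma dpoly_eval (p : K[X]) (z : K) :
    D (p.eval z) = (dpoly D p).eval (z : ℂ)
      + (p.map (algebraMap K ℂ)).derivative.eval (z : ℂ) * D z := by
  induction p using Polynomial.induction_on' with
  | add p q hp hq =>
    simp only [eval_add, map_add, Polynomial.map_add, derivative_add, dpoly_add, add_mul, hp, hq]
    ring
  | monomial k a =>
    rw [eval_monomial, D.leibniz, D.leibniz_pow, smul_coe, smul_coe, smul_coe]
    have h1 : dpoly D (monomial k a) = C (D a) * X ^ k := by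
      ext j
      simp only [coeff_dpoly, coeff_monomial, coeff_C_mul, coeff_X_pow, mul_ite, mul_one, mul_zero]
      split_ifs <;> simp_all
    rw [h1, map_monomial, derivative_monomial]
    simp only [eval_mul, eval_C, eval_pow, eval_X, eval_monomial,
      IntermediateField.algebraMap_apply]
    push_cast
    ring


lemma aeval_derivative_minpoly_ne_zero {F E : Type*} [Field F] [Field E] [Algebra F E]
    [CharZero F] {x : E} (hx : IsIntegral F x) :
    aeval x (derivative (minpoly F x)) ≠ 0 := by
  intro h
  have h1 : minpoly F x ∣ derivative (minpoly F x) := minpoly.dvd F x h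
  have h2 : derivative (minpoly F x) = 0 :=
    eq_zero_of_dvd_of_degree_lt h1 (degree_derivative_lt (minpoly.ne_zero hx))
  have h3 := natDegree_eq_zero_of_derivative_eq_zero h2
  exact absurd h3 (minpoly.natDegree_pos hx).ne'

variable {K : IntermediateField ℚ ℂ} (D : Derivation ℚ K ℂ)

lemma deriv_eq_zero_of_algebraic (a : K) (ha : IsAlgebraic ℚ (a : ℂ)) : D a = 0 := by
  have ha' : IsAlgebraic ℚ a := by
    rwa [show ((a : ℂ)) = algebraMap K ℂ a from rfl,
      isAlgebraic_algebraMap_iff (algebraMap K ℂ).injective] at ha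
  set m : ℚ[X] := minpoly ℚ a with hm
  set m₁ : K[X] := m.map (algebraMap ℚ K) with hm₁
  have he : m₁.eval a = 0 := by
    rw [hm₁, eval_map, ← aeval_def, minpoly.aeval]
  have key := dpoly_eval D m₁ a
  rw [he, map_zero, dpoly_map_rat, eval_zero, zero_add] at key
  have hmap : m₁.map (algebraMap K ℂ) = m.map (algebraMap ℚ ℂ) := by
    rw [hm₁, Polynomial.map_map, ← IsScalarTower.algebraMap_eq]
  have hne : (m₁.map (algebraMap K ℂ)).derivative.eval (a : ℂ) ≠ 0 := by
    rw [hmap, derivative_map, eval_map, ← aeval_def]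
    rw [hm, ← minpoly.algebraMap_eq (algebraMap K ℂ).injective a]
    exact aeval_derivative_minpoly_ne_zero ha.isIntegral
  rcases mul_eq_zero.mp key.symm with h | h
  · exact absurd h hne
  · exact h


variable (D : Derivation ℚ K ℂ) (y w : ℂ)

/-- The candidate value of the extended derivation on `p(y)`. -/
def NN (p : K[X]) : ℂ :=
  (dpoly D p).eval y + w * (p.map (algebraMap K ℂ)).derivative.eval y

lemma aeval_eq_eval_map (p : K[X]) : aeval y p = (p.map (algebraMap K ℂ)).eval y := by
  rw [aeval_def, eval_map]

lemma NN_add (p q : K[X]) : NN D y w (p + q) = NN D y w p + NN D y w q := by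
  simp only [NN, dpoly_add, Polynomial.map_add, derivative_add, eval_add]; ring

lemma NN_sub (p q : K[X]) : NN D y w (p - q) = NN D y w p - NN D y w q := by
  simp only [NN, dpoly_sub, Polynomial.map_sub, derivative_sub, eval_sub]; ring

lemma NN_zero : NN D y w 0 = 0 := by simp [NN, dpoly_zero]

lemma NN_C (a : K) : NN D y w (C a) = D a := by simp [NN, dpoly_C]

lemma NN_one : NN D y w 1 = 0 := by simp [NN, dpoly_one]

lemma NN_X : NN D y w X = w := by simp [NN, dpoly_X]

lemma NN_mul (p q : K[X]) :
    NN D y w (p * q) = NN D y w p * aeval y q + aeval y p * NN D y w q := by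
  simp only [NN, dpoly_mul, Polynomial.map_mul, derivative_mul, eval_add, eval_mul,
    aeval_eq_eval_map]
  ring

variable {D y w} in
lemma NN_welldef (hw : ∀ p : K[X], aeval y p = 0 → NN D y w p = 0)
    {f g f₁ g₁ : K[X]} (hg : aeval y g ≠ 0) (hg₁ : aeval y g₁ ≠ 0)
    (h : aeval y f * aeval y g₁ = aeval y f₁ * aeval y g) :
    (NN D y w f * aeval y g - aeval y f * NN D y w g) / (aeval y g) ^ 2
      = (NN D y w f₁ * aeval y g₁ - aeval y f₁ * NN D y w g₁) / (aeval y g₁) ^ 2 := by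
  have key : NN D y w (f * g₁ - f₁ * g) = 0 :=
    hw _ (by rw [map_sub, map_mul, map_mul, h, sub_self])
  rw [NN_sub, NN_mul, NN_mul] at key
  rw [div_eq_div_iff (pow_ne_zero 2 hg) (pow_ne_zero 2 hg₁)]
  linear_combination (aeval y g * aeval y g₁) * key
    - (NN D y w g * aeval y g₁ + NN D y w g₁ * aeval y g) * h

variable {y} in
lemma exists_rep {z : ℂ} (hz : z ∈ adjoin K {y}) :
    ∃ fg : K[X] × K[X], aeval y fg.2 ≠ 0 ∧ z = aeval y fg.1 / aeval y fg.2 := by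
  obtain ⟨f, g, hfg⟩ := (mem_adjoin_simple_iff K z).mp hz
  by_cases hg : aeval y g = 0
  · exact ⟨(0, 1), by simp, by simp [hfg, hg]⟩
  · exact ⟨(f, g), hg, hfg⟩

open Classical in
/-- Candidate extension of `D` to `K(y)`, as a bare function on `ℂ`. -/
def Efun (z : ℂ) : ℂ :=
  if hz : z ∈ adjoin K {y} then
    (NN D y w (exists_rep hz).choose.1 * aeval y (exists_rep hz).choose.2
      - aeval y (exists_rep hz).choose.1 * NN D y w (exists_rep hz).choose.2)
        / (aeval y (exists_rep hz).choose.2) ^ 2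
  else 0

variable {D y w}
variable (hw : ∀ p : K[X], aeval y p = 0 → NN D y w p = 0)

include hw in
lemma Efun_spec {z : ℂ} (hz : z ∈ adjoin K {y}) {f g : K[X]}
    (hg : aeval y g ≠ 0) (hrep : z = aeval y f / aeval y g) :
    Efun D y w z
      = (NN D y w f * aeval y g - aeval y f * NN D y w g) / (aeval y g) ^ 2 := by
  rw [Efun, dif_pos hz]
  obtain ⟨h2, h3⟩ := (exists_rep hz).choose_spec
  refine NN_welldef hw h2 hg ?_
  have h4 : aeval y (exists_rep hz).choose.1 / aeval y (exists_rep hz).choose.2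
      = aeval y f / aeval y g := by rw [← h3, hrep]
  rwa [div_eq_div_iff h2 hg] at h4

include hw in
lemma Efun_coe (a : K) : Efun D y w ↑a = D a := by
  have hmem : (a : ℂ) ∈ adjoin K {y} := by
    simpa using (adjoin K {y}).algebraMap_mem a
  rw [Efun_spec hw hmem (f := C a) (g := 1) (by simp) (by simp)]
  simp [NN_C, NN_one]

include hw in
lemma Efun_zero : Efun D y w 0 = 0 := by
  have := Efun_coe hw (0 : K)
  simpa using this

include hw in
lemma Efun_y : Efun D y w y = w := by
  rw [Efun_spec hw (mem_adjoin_simple_self K y) (f := X) (g := 1) (by simp) (by simp)]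
  simp [NN_X, NN_one]

include hw in
lemma Efun_add {z₁ z₂ : ℂ} (h₁ : z₁ ∈ adjoin K {y}) (h₂ : z₂ ∈ adjoin K {y}) :
    Efun D y w (z₁ + z₂) = Efun D y w z₁ + Efun D y w z₂ := by
  obtain ⟨⟨f₁, g₁⟩, hg₁, e₁⟩ := exists_rep h₁
  obtain ⟨⟨f₂, g₂⟩, hg₂, e₂⟩ := exists_rep h₂
  simp only at hg₁ hg₂ e₁ e₂
  have hg : aeval y (g₁ * g₂) ≠ 0 := by rw [map_mul]; exact mul_ne_zero hg₁ hg₂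
  rw [Efun_spec hw (add_mem h₁ h₂) (f := f₁ * g₂ + f₂ * g₁) (g := g₁ * g₂) hg
      (by rw [e₁, e₂, map_add, map_mul, map_mul, map_mul]; field_simp),
    Efun_spec hw h₁ hg₁ e₁, Efun_spec hw h₂ hg₂ e₂]
  rw [NN_add, NN_mul, NN_mul, NN_mul, map_add, map_mul, map_mul, map_mul]
  field_simp
  ring

include hw in
lemma Efun_mul {z₁ z₂ : ℂ} (h₁ : z₁ ∈ adjoin K {y}) (h₂ : z₂ ∈ adjoin K {y}) :
    Efun D y w (z₁ * z₂) = z₁ * Efun D y w z₂ + z₂ * Efun D y w z₁ := by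
  obtain ⟨⟨f₁, g₁⟩, hg₁, e₁⟩ := exists_rep h₁
  obtain ⟨⟨f₂, g₂⟩, hg₂, e₂⟩ := exists_rep h₂
  simp only at hg₁ hg₂ e₁ e₂
  have hg : aeval y (g₁ * g₂) ≠ 0 := by rw [map_mul]; exact mul_ne_zero hg₁ hg₂
  rw [Efun_spec hw (mul_mem h₁ h₂) (f := f₁ * f₂) (g := g₁ * g₂) hg
      (by rw [e₁, e₂, map_mul, map_mul]; field_simp),
    Efun_spec hw h₁ hg₁ e₁, Efun_spec hw h₂ hg₂ e₂, e₁, e₂]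
  rw [NN_mul, NN_mul, map_mul]
  field_simp
  rw [map_mul]; ring

variable (D y w)

/-- The extension of `D` to `K(y)` as an additive monoid hom. -/
def EfunAdd (hw : ∀ p : K[X], aeval y p = 0 → NN D y w p = 0) :
    ((adjoin K {y}).restrictScalars ℚ : IntermediateField ℚ ℂ) →+ ℂ where
  toFun z := Efun D y w (z : ℂ)
  map_zero' := by simpa using Efun_zero hw
  map_add' a b := Efun_add hw a.2 b.2

/-- The extension of `D` to `K(y)` as a derivation. -/
def Ederiv (hw : ∀ p : K[X], aeval y p = 0 → NN D y w p = 0) :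
    Derivation ℚ ((adjoin K {y}).restrictScalars ℚ : IntermediateField ℚ ℂ) ℂ where
  toLinearMap := (EfunAdd D y w hw).toRatLinearMap
  map_one_eq_zero' := by
    show Efun D y w ((1 : ((adjoin K {y}).restrictScalars ℚ : IntermediateField ℚ ℂ)) : ℂ) = 0
    have := Efun_coe hw (1 : K)
    simpa using this
  leibniz' a b := by
    show Efun D y w ((a : ℂ) * (b : ℂ)) = _
    rw [Efun_mul hw a.2 b.2, smul_coe, smul_coe]
    rfl

lemma Ederiv_apply (hw : ∀ p : K[X], aeval y p = 0 → NN D y w p = 0)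
    (z : ((adjoin K {y}).restrictScalars ℚ : IntermediateField ℚ ℂ)) :
    Ederiv D y w hw z = Efun D y w (z : ℂ) := rfl


lemma mem_L_of_mem {a : ℂ} (ha : a ∈ K) :
    a ∈ ((adjoin K {y}).restrictScalars ℚ : IntermediateField ℚ ℂ) := by
  simpa using (adjoin K {y}).algebraMap_mem (⟨a, ha⟩ : K)

lemma le_L : K ≤ (adjoin K {y}).restrictScalars ℚ := fun a ha => mem_L_of_mem y ha

lemma mem_L_self : y ∈ ((adjoin K {y}).restrictScalars ℚ : IntermediateField ℚ ℂ) :=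
  mem_adjoin_simple_self K y

variable {D y w}

lemma Ederiv_coe (hw : ∀ p : K[X], aeval y p = 0 → NN D y w p = 0)
    (a : ℂ) (ha : a ∈ K) :
    Ederiv D y w hw ⟨a, mem_L_of_mem y ha⟩ = D ⟨a, ha⟩ := by
  rw [Ederiv_apply]
  exact Efun_coe hw ⟨a, ha⟩

lemma Ederiv_y (hw : ∀ p : K[X], aeval y p = 0 → NN D y w p = 0) :
    Ederiv D y w hw ⟨y, mem_L_self y⟩ = w := by
  rw [Ederiv_apply]
  exact Efun_y hw

/-- One-step extension, transcendental case: prescribe any value `w` at `y`. -/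
lemma extend_transcendental {K : IntermediateField ℚ ℂ} (D : Derivation ℚ K ℂ) {y : ℂ}
    (hy : Transcendental K y) (w : ℂ) :
    ∃ (L : IntermediateField ℚ ℂ) (E : Derivation ℚ L ℂ) (hKL : K ≤ L) (hyL : y ∈ L),
      (∀ (a : ℂ) (ha : a ∈ K), E ⟨a, hKL ha⟩ = D ⟨a, ha⟩) ∧ E ⟨y, hyL⟩ = w := by
  have hw : ∀ p : K[X], aeval y p = 0 → NN D y w p = 0 := by
    intro p hp
    rw [transcendental_iff] at hy
    rw [hy p hp, NN_zero]
  exact ⟨_, Ederiv D y w hw, le_L y, mem_L_self y,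
    fun a ha => Ederiv_coe hw a ha, Ederiv_y hw⟩

/-- One-step extension, algebraic case. -/
lemma extend_algebraic {K : IntermediateField ℚ ℂ} (D : Derivation ℚ K ℂ) {y : ℂ}
    (hy : IsAlgebraic K y) :
    ∃ (L : IntermediateField ℚ ℂ) (E : Derivation ℚ L ℂ) (hKL : K ≤ L), y ∈ L ∧
      (∀ (a : ℂ) (ha : a ∈ K), E ⟨a, hKL ha⟩ = D ⟨a, ha⟩) := by
  haveI : CharZero K := charZero_of_injective_algebraMap (algebraMap ℚ K).injective
  have hint : IsIntegral K y := hy.isIntegral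
  set m : K[X] := minpoly K y with hm
  have hd : aeval y (derivative m) ≠ 0 := aeval_derivative_minpoly_ne_zero hint
  set w : ℂ := -((dpoly D m).eval y) / aeval y (derivative m) with hwdef
  have hNm : NN D y w m = 0 := by
    rw [NN, hwdef, derivative_map, ← aeval_eq_eval_map]
    field_simp; ring
  have hw : ∀ p : K[X], aeval y p = 0 → NN D y w p = 0 := by
    intro p hp
    obtain ⟨q, rfl⟩ := minpoly.dvd K y hp
    rw [NN_mul, hNm, minpoly.aeval, zero_mul, zero_mul, zero_add]
  exact ⟨_, Ederiv D y w hw, le_L y, mem_L_self y, fun a ha => Ederiv_coe hw a ha⟩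

/-- One-step extension, any element. -/
lemma extend_any {K : IntermediateField ℚ ℂ} (D : Derivation ℚ K ℂ) (y : ℂ) :
    ∃ (L : IntermediateField ℚ ℂ) (E : Derivation ℚ L ℂ) (hKL : K ≤ L), y ∈ L ∧
      (∀ (a : ℂ) (ha : a ∈ K), E ⟨a, hKL ha⟩ = D ⟨a, ha⟩) := by
  by_cases hy : IsAlgebraic K y
  · exact extend_algebraic D hy
  · obtain ⟨L, E, hKL, hyL, hext, _⟩ := extend_transcendental D hy 0
    exact ⟨L, E, hKL, hyL, hext⟩

/-- Extension to a finite set of new elements. -/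
lemma extend_finset (s : Finset ℂ) :
    ∀ (K : IntermediateField ℚ ℂ) (D : Derivation ℚ K ℂ),
    ∃ (L : IntermediateField ℚ ℂ) (E : Derivation ℚ L ℂ) (hKL : K ≤ L),
      (∀ c ∈ s, c ∈ L) ∧ (∀ (a : ℂ) (ha : a ∈ K), E ⟨a, hKL ha⟩ = D ⟨a, ha⟩) := by
  induction s using Finset.induction_on with
  | empty => exact fun K D => ⟨K, D, le_rfl, by simp, fun a ha => rfl⟩
  | insert _ _ hni ih =>
    rename_i c s
    intro K D
    obtain ⟨L₁, E₁, h₁, hc₁, hext₁⟩ := extend_any D c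
    obtain ⟨L, E, h₂, hs, hext₂⟩ := ih L₁ E₁
    refine ⟨L, E, h₁.trans h₂, ?_, ?_⟩
    · intro b hb
      rcases Finset.mem_insert.mp hb with rfl | hb
      · exact h₂ hc₁
      · exact hs b hb
    · intro a ha
      rw [hext₂ a (h₁ ha), hext₁ a ha]


instance : Algebra.IsIntegral ℚ (⊥ : IntermediateField ℚ ℂ) := by
  refine ⟨fun a => ?_⟩
  obtain ⟨q, hq⟩ := IntermediateField.mem_bot.mp a.2
  have : algebraMap ℚ (⊥ : IntermediateField ℚ ℂ) q = a := by
    apply Subtype.ext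
    exact hq
  rw [← this]
  exact isIntegral_algebraMap

/-- The main existence result: a derivation on a f.g. subfield of `ℂ` containing a
prescribed finite set, taking the value `1` on a prescribed transcendental element. -/
lemma exists_derivation_ne_zero (x : ℂ) (hx : Transcendental ℚ x) (s : Finset ℂ) :
    ∃ (L : IntermediateField ℚ ℂ) (E : Derivation ℚ L ℂ) (hxL : x ∈ L),
      (∀ c ∈ s, c ∈ L) ∧ E ⟨x, hxL⟩ = 1 := by
  have hx' : Transcendental (⊥ : IntermediateField ℚ ℂ) x := by
    intro h
    exact hx (isIntegral_trans x h.isIntegral).isAlgebraic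
  obtain ⟨L₁, E₁, h₁, hx₁, hext₁, hval⟩ :=
    extend_transcendental (0 : Derivation ℚ (⊥ : IntermediateField ℚ ℂ) ℂ) hx' 1
  obtain ⟨L, E, h₂, hs, hext₂⟩ := extend_finset s L₁ E₁
  exact ⟨L, E, h₂ hx₁, hs, by rw [hext₂ x hx₁, hval]⟩


/-! ### Main theorem -/

variable {L : IntermediateField ℚ ℂ}

lemma coe_eval (p : L[X]) (z : L) :
    ((p.eval z : L) : ℂ) = (p.map (algebraMap L ℂ)).eval (z : ℂ) := by
  rw [eval_map, show ((z : ℂ)) = algebraMap L ℂ z from rfl, eval₂_at_apply]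
  rfl

end AlgCrit

open AlgCrit IntermediateField

theorem normalized_poly_algebraic_iff_critical_values_algebraic
    (n : ℕ) (hn : 1 ≤ n) (P : ℂ[X]) (hmonic : P.Monic) (hdeg : P.natDegree = n)
    (hnorm : P.coeff (n - 1) = 0) :
    (∀ i : ℕ, IsAlgebraic ℚ (P.coeff i)) ↔
      (∀ ζ : ℂ, (derivative P).IsRoot ζ → IsAlgebraic ℚ (P.eval ζ)) := by
  -- the degree-one case is trivial: P = X
  rcases eq_or_lt_of_le hn with h1 | h2
  · have h0 : P.coeff 0 = 0 := by rw [← h1] at hnorm; simpa using hnorm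
    have hP : P = X := by
      have := hmonic.eq_X_add_C (by rw [hdeg, ← h1])
      rw [h0, map_zero, add_zero] at this
      exact this
    constructor
    · intro _ ζ hζ
      exfalso
      rw [hP, derivative_X, IsRoot, eval_one] at hζ
      exact one_ne_zero hζ
    · intro _ i
      rw [hP, coeff_X]
      split_ifs
      · exact isAlgebraic_one
      · exact isAlgebraic_zero
  -- now n ≥ 2
  -- basic facts about the derivative
  have hP'coeff : (derivative P).coeff (n - 1) = (n : ℂ) := by
    rw [coeff_derivative, show n - 1 + 1 = n by omega, show P.coeff n = 1 from hdeg ▸ hmonic.coeff_natDegree]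
    have : ((n - 1 : ℕ) : ℂ) + 1 = (n : ℂ) := by
      push_cast [Nat.cast_sub hn]
      ring
    rw [this, one_mul]
  have hncast : (n : ℂ) ≠ 0 := by
    exact_mod_cast (by omega : n ≠ 0)
  have hP'ne : derivative P ≠ 0 := fun h => by
    rw [h, coeff_zero] at hP'coeff
    exact hncast hP'coeff.symm
  have hP'deg : (derivative P).natDegree = n - 1 := by
    refine le_antisymm (hdeg ▸ natDegree_derivative_le P) (le_natDegree_of_ne_zero ?_)
    rw [hP'coeff]
    exact_mod_cast (by omega : n ≠ 0)
  have hcard : Multiset.card (derivative P).roots = n - 1 := by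
    rw [splits_iff_card_roots.mp (IsAlgClosed.splits (derivative P)), hP'deg]
  -- membership of coefficients
  have hdeglt : P.natDegree < n + 1 := by omega
  constructor
  · -- coefficients algebraic → critical values algebraic
    intro hcoeff ζ hζ
    by_contra hv
    obtain ⟨L, E, hvL, hsL, hval⟩ := exists_derivation_ne_zero (P.eval ζ) hv
      (insert ζ ((Finset.range (n + 1)).image P.coeff))
    have hζL : ζ ∈ L := hsL ζ (Finset.mem_insert_self _ _)
    have hcL : ∀ i, P.coeff i ∈ L := by
      intro i
      by_cases hi : i < n + 1
      · exact hsL _ (Finset.mem_insert_of_mem (Finset.mem_image_of_mem _ (Finset.mem_range.mpr hi)))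
      · rw [coeff_eq_zero_of_natDegree_lt (by omega)]
        exact zero_mem L
    set P₀ : L[X] := ∑ i ∈ Finset.range (n + 1), C (⟨P.coeff i, hcL i⟩ : L) * X ^ i with hP₀
    have hmap : P₀.map (algebraMap L ℂ) = P := by
      rw [hP₀, Polynomial.map_sum]
      conv_rhs => rw [P.as_sum_range' (n + 1) hdeglt]
      refine Finset.sum_congr rfl fun i _ => ?_
      rw [Polynomial.map_mul, map_C, Polynomial.map_pow, map_X, C_mul_X_pow_eq_monomial]
      rfl
    have hcoeff₀ : ∀ k, ((P₀.coeff k : L) : ℂ) = P.coeff k := by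
      intro k
      rw [← hmap, coeff_map]
      rfl
    have hdp : dpoly E P₀ = 0 := by
      ext k
      rw [coeff_dpoly, coeff_zero]
      refine deriv_eq_zero_of_algebraic E _ ?_
      rw [hcoeff₀ k]
      exact hcoeff k
    set ζ₀ : L := ⟨ζ, hζL⟩ with hζ₀
    have hveq : (⟨P.eval ζ, hvL⟩ : L) = P₀.eval ζ₀ := by
      apply Subtype.ext
      rw [coe_eval, hmap]
    have := dpoly_eval E P₀ ζ₀
    rw [hdp, eval_zero, zero_add, hmap, ← hveq, hval] at this
    rw [show (derivative P).eval ((ζ₀ : L) : ℂ) = 0 from hζ, zero_mul] at this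
    exact one_ne_zero this
  · -- critical values algebraic → coefficients algebraic
    intro hcrit i₀
    by_contra hx
    obtain ⟨L, E, hxL, hsL, hval⟩ := exists_derivation_ne_zero (P.coeff i₀) hx
      ((derivative P).roots.toFinset ∪ (Finset.range (n + 1)).image P.coeff)
    have hcL : ∀ i, P.coeff i ∈ L := by
      intro i
      by_cases hi : i < n + 1
      · exact hsL _ (Finset.mem_union_right _
          (Finset.mem_image_of_mem _ (Finset.mem_range.mpr hi)))
      · rw [coeff_eq_zero_of_natDegree_lt (by omega)]
        exact zero_mem L
    set P₀ : L[X] := ∑ i ∈ Finset.range (n + 1), C (⟨P.coeff i, hcL i⟩ : L) * X ^ i with hP₀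
    have hmap : P₀.map (algebraMap L ℂ) = P := by
      rw [hP₀, Polynomial.map_sum]
      conv_rhs => rw [P.as_sum_range' (n + 1) hdeglt]
      refine Finset.sum_congr rfl fun i _ => ?_
      rw [Polynomial.map_mul, map_C, Polynomial.map_pow, map_X, C_mul_X_pow_eq_monomial]
      rfl
    have hcoeff₀ : ∀ k, ((P₀.coeff k : L) : ℂ) = P.coeff k := by
      intro k
      rw [← hmap, coeff_map]
      rfl
    -- the key claim : dpoly E P₀ = 0
    have hdp0 : dpoly E P₀ = 0 := by
      by_contra hne
      have hroots : (derivative P).roots ≤ (dpoly E P₀).roots := by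
        rw [Multiset.le_iff_count]
        intro ζ
        rw [count_roots, count_roots]
        set m := rootMultiplicity ζ (derivative P) with hm
        rcases Nat.eq_zero_or_pos m with h0 | hpos
        · omega
        -- ζ is a root of P'
        have hζroot : (derivative P).IsRoot ζ := (rootMultiplicity_pos hP'ne).mp hpos
        have hζL : ζ ∈ L := hsL ζ (Finset.mem_union_left _
          (Multiset.mem_toFinset.mpr (mem_roots'.mpr ⟨hP'ne, hζroot⟩)))
        set ζ₀ : L := ⟨ζ, hζL⟩ with hζ₀
        set v : ℂ := P.eval ζ with hv
        have hvalg : IsAlgebraic ℚ v := hcrit ζ hζroot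
        set v₀ : L := P₀.eval ζ₀ with hv₀def
        have hv₀ : (v₀ : ℂ) = v := by
          rw [hv₀def, coe_eval, hmap]
        -- multiplicities
        have hrootPv : (P - C v).IsRoot ζ := by
          simp [IsRoot, hv]
        have hPvne : P - C v ≠ 0 := by
          intro h
          have := congrArg natDegree (sub_eq_zero.mp h)
          rw [hdeg, natDegree_C] at this
          omega
        set μ := rootMultiplicity ζ (P - C v) with hμ
        have hμpos : 1 ≤ μ := (rootMultiplicity_pos hPvne).mpr hrootPv
        have hμm : m = μ - 1 := by
          rw [hm, hμ, ← derivative_rootMultiplicity_of_root hrootPv]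
          simp
        have hdvd : (X - C ζ) ^ μ ∣ P - C v := pow_rootMultiplicity_dvd _ ζ
        -- transfer the divisibility to L[X]
        have hdvd₀ : (X - C ζ₀) ^ μ ∣ P₀ - C v₀ := by
          rw [← map_dvd_map' (algebraMap L ℂ)]
          have h1 : (X - C ζ₀).map (algebraMap L ℂ) = X - C ζ := by
            rw [Polynomial.map_sub, map_X, map_C]
            rfl
          have h2 : (P₀ - C v₀).map (algebraMap L ℂ) = P - C v := by
            rw [Polynomial.map_sub, hmap, map_C, show algebraMap L ℂ v₀ = v from hv₀]
          rw [Polynomial.map_pow, h1, h2]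
          exact hdvd
        obtain ⟨h, hfac⟩ := hdvd₀
        have e1 : dpoly E (P₀ - C v₀) = dpoly E P₀ := by
          rw [dpoly_sub, dpoly_C, deriv_eq_zero_of_algebraic E v₀ (by rw [hv₀]; exact hvalg),
            map_zero, sub_zero]
        have hmaps : (X - C ζ₀).map (algebraMap L ℂ) = X - C ζ := by
          rw [Polynomial.map_sub, map_X, map_C]
          rfl
        have hdvd2 : (X - C ζ) ^ m ∣ dpoly E P₀ := by
          rw [← e1, hfac, show μ = m + 1 by omega, dpoly_mul, dpoly_pow, Polynomial.map_pow,
            hmaps]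
          refine dvd_add ?_ ?_
          · rw [smul_mul_assoc, nsmul_eq_mul]
            exact ⟨((1 + m : ℕ) : ℂ[X]) * dpoly E (X - C ζ₀) * h.map (algebraMap L ℂ),
              by push_cast; ring⟩
          · exact ⟨(X - C ζ) * dpoly E h, by ring⟩
        exact (le_rootMultiplicity_iff hne).mpr hdvd2
      -- counting roots gives a contradiction
      have hle : (n - 1 : ℕ) ≤ (dpoly E P₀).natDegree := by
        calc (n - 1 : ℕ) = Multiset.card (derivative P).roots := hcard.symm
        _ ≤ Multiset.card (dpoly E P₀).roots := Multiset.card_le_card hroots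
        _ ≤ (dpoly E P₀).natDegree := (dpoly E P₀).card_roots'
      have hub : (dpoly E P₀).natDegree ≤ n - 2 := by
        rw [natDegree_le_iff_coeff_eq_zero]
        intro k hk
        rw [coeff_dpoly]
        refine deriv_eq_zero_of_algebraic E _ ?_
        rw [hcoeff₀ k]
        rcases lt_trichotomy k n with hlt | heq | hgt
        · have : k = n - 1 := by omega
          rw [this, hnorm]
          exact isAlgebraic_zero
        · rw [heq, show P.coeff n = 1 from hdeg ▸ hmonic.coeff_natDegree]
          exact isAlgebraic_one
        · rw [coeff_eq_zero_of_natDegree_lt (by omega)]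
          exact isAlgebraic_zero
      omega
    -- conclude
    have hxk : P₀.coeff i₀ = (⟨P.coeff i₀, hxL⟩ : L) := Subtype.ext (hcoeff₀ i₀)
    have : E (P₀.coeff i₀) = 0 := by
      have := congrArg (fun p : ℂ[X] => p.coeff i₀) hdp0
      simpa [coeff_dpoly] using this
    rw [hxk, hval] at this
    exact one_ne_zero this
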